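/- Let A be a full row rank m×n rational matrix whose i-th row r has all entries in {0,±1}. Then A is equimodular if and only if for every j in the support of r, the matrix A//(i,j) obtained from A by pivoting at (i,j) and then deleting row i and column j is equimodular. -/

import Mathlib

/-- All the nonzero maximal (m×m) subdeterminants of `A` have the same absolute value. -/
def Equimodular {m n : ℕ} (A : Matrix (Fin m) (Fin n) ℚ) : Prop :=
  ∃ d : ℚ, ∀ g : Fin m ↪ Fin n,
    (A.submatrix id g).det ≠ 0 → |(A.submatrix id g).det| = d

/-- Every set of linearly independent rows of `A` forms an equimodular matrix. -/
def TotallyEquimodular {m n : ℕ} (A : Matrix (Fin m) (Fin n) ℚ) : Prop :=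
  ∀ (k : ℕ) (e : Fin k ↪ Fin m),
    LinearIndependent ℚ (fun i => A (e i)) → Equimodular (A.submatrix e id)

/-- Gaussian pivot of `A` at position `(i, j)`. -/
def pivotAt {m n : ℕ} (A : Matrix (Fin m) (Fin n) ℚ) (i : Fin m) (j : Fin n) :
    Matrix (Fin m) (Fin n) ℚ :=
  Matrix.of fun r c => if r = i then A i c / A i j else A r c - A r j / A i j * A i c

/-- Trim of `A` at `(i, j)`: pivot at `(i, j)`, then delete row `i` and column `j`. -/
def trimAt {m n : ℕ} (A : Matrix (Fin (m + 1)) (Fin (n + 1)) ℚ)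
    (i : Fin (m + 1)) (j : Fin (n + 1)) : Matrix (Fin m) (Fin n) ℚ :=
  (pivotAt A i j).submatrix i.succAbove j.succAbove

open Matrix


lemma eqm_abs_det_range_sub {k N : ℕ} (M : Matrix (Fin k) (Fin N) ℚ)
    (g₁ g₂ : Fin k ↪ Fin N) (h : ∀ c, ∃ c', g₁ c' = g₂ c) :
    |(M.submatrix id ⇑g₂).det| = |(M.submatrix id ⇑g₁).det| := by
  choose σ₀ hσ₀ using h
  have hinj : Function.Injective σ₀ := by
    intro a b hab
    apply g₂.injective
    rw [← hσ₀ a, ← hσ₀ b, hab]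
  have hbij : Function.Bijective σ₀ := (Finite.injective_iff_bijective).mp hinj
  let σ : Equiv.Perm (Fin k) := Equiv.ofBijective σ₀ hbij
  have hM : M.submatrix id ⇑g₂ = (M.submatrix id ⇑g₁).submatrix id σ := by
    ext r c
    have : σ c = σ₀ c := rfl
    simp [this, hσ₀ c]
  rw [hM, det_permute', abs_mul]
  rcases Int.units_eq_one_or (Equiv.Perm.sign σ) with hs | hs <;> simp [hs]

lemma eqm_pivot_det {m n : ℕ} (A : Matrix (Fin (m+1)) (Fin (n+1)) ℚ) (i : Fin (m+1))
    (j : Fin (n+1)) (g : Fin (m+1) ↪ Fin (n+1)) :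
    ((pivotAt A i j).submatrix id ⇑g).det = (A.submatrix id ⇑g).det / A i j := by
  set N : Matrix (Fin (m+1)) (Fin (m+1)) ℚ := A.submatrix id ⇑g with hN
  set c : Fin (m+1) → ℚ := fun r => if r = i then 0 else -(A r j / A i j) with hc
  set M₀ : Matrix (Fin (m+1)) (Fin (m+1)) ℚ := fun r c' => N r c' + c r * N i c' with hM₀
  have h0 : M₀.det = N.det :=
    det_eq_of_forall_row_eq_smul_add_const c i (if_pos rfl) (fun r c' => rfl)
  have hrow_i : M₀ i = N i := by
    funext c'
    simp [hM₀, hc]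
  have hpiv : (pivotAt A i j).submatrix id ⇑g = M₀.updateRow i ((A i j)⁻¹ • M₀ i) := by
    ext r c'
    by_cases hr : r = i
    · subst hr
      rw [updateRow_self]; simp [pivotAt, hM₀, hc, updateRow_self, div_eq_inv_mul, hN]
    · rw [updateRow_ne hr]
      simp [pivotAt, hM₀, hc, hr, hN]
      ring
  rw [hpiv, det_updateRow_smul, updateRow_eq_self, h0]
  rw [div_eq_inv_mul, mul_comm]

lemma eqm_abs_det_pivot_col {m : ℕ} (M : Matrix (Fin (m+1)) (Fin (m+1)) ℚ) (i k : Fin (m+1))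
    (h1 : ∀ r, r ≠ i → M r k = 0) (h2 : M i k = 1) :
    |M.det| = |(M.submatrix i.succAbove k.succAbove).det| := by
  rw [det_succ_column M k, Finset.sum_eq_single i]
  · rw [h2, mul_one, abs_mul, abs_pow]
    norm_num
  · intro r _ hr
    rw [h1 r hr, mul_zero, zero_mul]
  · intro h
    exact absurd (Finset.mem_univ i) h

lemma eqm_trim_minor {m n : ℕ} (A : Matrix (Fin (m+1)) (Fin (n+1)) ℚ) (i : Fin (m+1))
    {j : Fin (n+1)} (hrow : ∀ c, A i c = 0 ∨ A i c = 1 ∨ A i c = -1) (hj : A i j ≠ 0)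
    (h : Fin (m+1) ↪ Fin (n+1)) (k : Fin (m+1)) (hk : h k = j) :
    ∃ h' : Fin m ↪ Fin n, (∀ l, j.succAbove (h' l) = h (k.succAbove l)) ∧
      |((trimAt A i j).submatrix id ⇑h').det| = |(A.submatrix id ⇑h).det| := by
  have hne : ∀ l : Fin m, h (k.succAbove l) ≠ j := by
    intro l he
    exact Fin.succAbove_ne k l (h.injective (he.trans hk.symm))
  choose f hf using fun l => Fin.exists_succAbove_eq (hne l)
  have hfinj : Function.Injective f := by
    intro a b hab
    have h2 : h (k.succAbove a) = h (k.succAbove b) := by rw [← hf a, ← hf b, hab]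
    exact Fin.succAbove_right_injective (h.injective h2)
  refine ⟨⟨f, hfinj⟩, hf, ?_⟩
  set B := pivotAt A i j with hB
  set M : Matrix (Fin (m+1)) (Fin (m+1)) ℚ := B.submatrix id ⇑h with hM
  have hcol0 : ∀ r, r ≠ i → M r k = 0 := by
    intro r hr
    show B r (h k) = 0
    rw [hk, hB]
    simp only [pivotAt, of_apply, if_neg hr]
    rw [div_mul_cancel₀ _ hj, sub_self]
  have hcol1 : M i k = 1 := by
    show B i (h k) = 1
    rw [hk, hB]
    simp only [pivotAt, of_apply, if_pos rfl]
    exact div_self hj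
  have hL0 : |M.det| = |(M.submatrix i.succAbove k.succAbove).det| :=
    eqm_abs_det_pivot_col M i k hcol0 hcol1
  have hsub : M.submatrix i.succAbove k.succAbove = (trimAt A i j).submatrix id f := by
    ext r c
    simp only [submatrix_apply, hM, hB, id_eq, trimAt, hf]
  have hpd : M.det = (A.submatrix id ⇑h).det / A i j := eqm_pivot_det A i j h
  have habs1 : |A i j| = 1 := by
    rcases hrow j with h0 | h1 | h1
    · exact absurd h0 hj
    · rw [h1]; norm_num
    · rw [h1]; norm_num
  rw [hsub] at hL0
  show |((trimAt A i j).submatrix id f).det| = _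
  rw [← hL0, hpd, abs_div, habs1, div_one]

/-- Two maximal minors sharing a column of the support of row `i` have equal |det|. -/
lemma eqm_common_col {m n : ℕ} (A : Matrix (Fin (m+1)) (Fin (n+1)) ℚ) (i : Fin (m+1))
    (hrow : ∀ c, A i c = 0 ∨ A i c = 1 ∨ A i c = -1)
    (H : ∀ j, A i j ≠ 0 → Equimodular (trimAt A i j))
    {j : Fin (n+1)} (hj : A i j ≠ 0) (h₁ h₂ : Fin (m+1) ↪ Fin (n+1))
    (k₁ k₂ : Fin (m+1)) (hk₁ : h₁ k₁ = j) (hk₂ : h₂ k₂ = j)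
    (hd₁ : (A.submatrix id ⇑h₁).det ≠ 0) (hd₂ : (A.submatrix id ⇑h₂).det ≠ 0) :
    |(A.submatrix id ⇑h₁).det| = |(A.submatrix id ⇑h₂).det| := by
  obtain ⟨d, hd⟩ := H j hj
  obtain ⟨f₁, -, e₁⟩ := eqm_trim_minor A i hrow hj h₁ k₁ hk₁
  obtain ⟨f₂, -, e₂⟩ := eqm_trim_minor A i hrow hj h₂ k₂ hk₂
  have n₁ : ((trimAt A i j).submatrix id ⇑f₁).det ≠ 0 := by
    intro h0
    rw [h0, abs_zero] at e₁
    exact hd₁ (abs_eq_zero.mp e₁.symm)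
  have n₂ : ((trimAt A i j).submatrix id ⇑f₂).det ≠ 0 := by
    intro h0
    rw [h0, abs_zero] at e₂
    exact hd₂ (abs_eq_zero.mp e₂.symm)
  rw [← e₁, ← e₂, hd f₁ n₁, hd f₂ n₂]

lemma eqm_update_inj {m n : ℕ} (g : Fin (m+1) ↪ Fin (n+1)) (y : Fin (n+1))
    (hy : ∀ c, g c ≠ y) (k : Fin (m+1)) :
    Function.Injective (Function.update ⇑g k y) := by
  intro a b hab
  by_cases ha : a = k <;> by_cases hb : b = k
  · rw [ha, hb]
  · rw [ha, Function.update_self, Function.update_of_ne hb] at hab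
    exact absurd hab.symm (hy b)
  · rw [hb, Function.update_self, Function.update_of_ne ha] at hab
    exact absurd hab (hy a)
  · rw [Function.update_of_ne ha, Function.update_of_ne hb] at hab
    exact g.injective hab

lemma eqm_adjacent {m n : ℕ} (A : Matrix (Fin (m+1)) (Fin (n+1)) ℚ) (i : Fin (m+1))
    (hrow : ∀ c, A i c = 0 ∨ A i c = 1 ∨ A i c = -1)
    (H : ∀ j, A i j ≠ 0 → Equimodular (trimAt A i j))
    (g g' : Fin (m+1) ↪ Fin (n+1)) (k₀ : Fin (m+1)) (y : Fin (n+1))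
    (hy : ∀ c, g c ≠ y)
    (hgg' : ∀ c, g' c = if c = k₀ then y else g c)
    (hdg : (A.submatrix id ⇑g).det ≠ 0) (hdg' : (A.submatrix id ⇑g').det ≠ 0) :
    |(A.submatrix id ⇑g).det| = |(A.submatrix id ⇑g').det| := by
  by_cases hxa : ∃ k', k' ≠ k₀ ∧ A i (g k') ≠ 0
  · obtain ⟨k', hk'ne, hj⟩ := hxa
    have hg'k' : g' k' = g k' := by rw [hgg', if_neg hk'ne]
    exact eqm_common_col A i hrow H hj g g' k' k' rfl hg'k' hdg hdg'
  · push_neg at hxa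
    -- row i vanishes on all columns of g except possibly k₀
    have hx : A i (g k₀) ≠ 0 := by
      intro h0
      apply hdg
      apply det_eq_zero_of_row_eq_zero i
      intro c
      by_cases hc : c = k₀
      · rw [hc]; exact h0
      · exact hxa c hc
    have hyne : A i y ≠ 0 := by
      intro h0
      apply hdg'
      apply det_eq_zero_of_row_eq_zero i
      intro c
      show A i (g' c) = 0
      rw [hgg']
      by_cases hc : c = k₀
      · rw [if_pos hc]; exact h0
      · rw [if_neg hc]; exact hxa c hc
    by_cases hex : ∃ k'', k'' ≠ k₀ ∧ (A.submatrix id (Function.update ⇑g k'' y)).det ≠ 0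
    · obtain ⟨k'', hk''ne, hu⟩ := hex
      set u : Fin (m+1) ↪ Fin (n+1) := ⟨Function.update ⇑g k'' y, eqm_update_inj g y hy k''⟩ with hudef
      have hu' : (A.submatrix id ⇑u).det ≠ 0 := hu
      have e1 : |(A.submatrix id ⇑g).det| = |(A.submatrix id ⇑u).det| := by
        refine eqm_common_col A i hrow H hx g u k₀ k₀ rfl ?_ hdg hu'
        show Function.update ⇑g k'' y k₀ = g k₀
        rw [Function.update_of_ne (Ne.symm hk''ne)]
      have e2 : |(A.submatrix id ⇑g').det| = |(A.submatrix id ⇑u).det| := by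
        refine eqm_common_col A i hrow H hyne g' u k₀ k'' ?_ ?_ hdg' hu'
        · rw [hgg', if_pos rfl]
        · show Function.update ⇑g k'' y k'' = y
          rw [Function.update_self]
      rw [e1, e2]
    · push_neg at hex
      set M : Matrix (Fin (m+1)) (Fin (m+1)) ℚ := A.submatrix id ⇑g with hMdef
      set colY : Fin (m+1) → ℚ := fun r => A r y with hcolY
      have hupd : ∀ k'', M.updateCol k'' colY = A.submatrix id (Function.update ⇑g k'' y) := by
        intro k''
        ext r c
        rw [updateCol_apply]
        by_cases hc : c = k''
        · simp [hc, hcolY]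
        · simp [hc, hMdef]
      have hcram : ∀ k'', k'' ≠ k₀ → cramer M colY k'' = 0 := by
        intro k'' hk''
        rw [cramer_apply, hupd]
        exact hex k'' hk''
      have hMunit : IsUnit M.det := isUnit_iff_ne_zero.mpr hdg
      set cv : Fin (m+1) → ℚ := M⁻¹ *ᵥ colY with hcv
      have hMc : M *ᵥ cv = colY := by
        rw [hcv, mulVec_mulVec, mul_nonsing_inv _ hMunit, one_mulVec]
      have hcaM : cramer M colY = M.det • cv := by
        rw [← hMc, cramer_eq_adjugate_mulVec, mulVec_mulVec, adjugate_mul,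
          smul_mulVec, one_mulVec]
      have hcz : ∀ k'', k'' ≠ k₀ → cv k'' = 0 := by
        intro k'' hk''
        have := hcram k'' hk''
        rw [hcaM] at this
        simpa [hdg] using this
      have hcolYe : ∀ r, A r y = A r (g k₀) * cv k₀ := by
        intro r
        have h1 : A r y = (M *ᵥ cv) r := (congrFun hMc r).symm
        rw [h1, mulVec, dotProduct, Finset.sum_eq_single k₀]
        · rfl
        · intro b _ hb
          rw [hcz b hb, mul_zero]
        · intro hmem
          exact absurd (Finset.mem_univ k₀) hmem
      have habs1 : ∀ z : Fin (n+1), A i z ≠ 0 → |A i z| = 1 := by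
        intro z hz
        rcases hrow z with h0 | h1 | h1
        · exact absurd h0 hz
        · rw [h1]; norm_num
        · rw [h1]; norm_num
      have habsc : |cv k₀| = 1 := by
        have hiy := hcolYe i
        have e := congrArg abs hiy
        rw [abs_mul, habs1 y hyne, habs1 (g k₀) hx, one_mul] at e
        exact e.symm
      have hg'col : A.submatrix id ⇑g' = M.updateCol k₀ colY := by
        ext r c
        rw [updateCol_apply]
        by_cases hc : c = k₀
        · rw [if_pos hc]
          show A r (g' c) = A r y
          rw [hgg', if_pos hc]
        · rw [if_neg hc]
          show A r (g' c) = A r (g c)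
          rw [hgg', if_neg hc]
      have hsmul : colY = cv k₀ • (fun r => M r k₀) := by
        funext r
        show A r y = cv k₀ * A r (g k₀)
        rw [hcolYe r, mul_comm]
      rw [hg'col, hsmul, det_updateCol_smul, updateCol_eq_self, abs_mul, habsc, one_mul]

lemma eqm_pairwise {m n : ℕ} (A : Matrix (Fin (m+1)) (Fin (n+1)) ℚ) (i : Fin (m+1))
    (hrow : ∀ c, A i c = 0 ∨ A i c = 1 ∨ A i c = -1)
    (H : ∀ j, A i j ≠ 0 → Equimodular (trimAt A i j)) :
    ∀ (N : ℕ) (g₁ g₂ : Fin (m+1) ↪ Fin (n+1)),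
      (Finset.image ⇑g₁ Finset.univ \ Finset.image ⇑g₂ Finset.univ).card ≤ N →
      (A.submatrix id ⇑g₁).det ≠ 0 → (A.submatrix id ⇑g₂).det ≠ 0 →
      |(A.submatrix id ⇑g₁).det| = |(A.submatrix id ⇑g₂).det| := by
  intro N
  induction N with
  | zero =>
    intro g₁ g₂ hcard hd₁ hd₂
    have hemp : Finset.image ⇑g₁ Finset.univ \ Finset.image ⇑g₂ Finset.univ = ∅ :=
      Finset.card_eq_zero.mp (Nat.le_zero.mp hcard)
    have hsub : ∀ c, ∃ c', g₂ c' = g₁ c := by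
      intro c
      have : g₁ c ∈ Finset.image ⇑g₂ Finset.univ := by
        have := Finset.sdiff_eq_empty_iff_subset.mp hemp
        exact this (Finset.mem_image_of_mem _ (Finset.mem_univ c))
      obtain ⟨c', -, hc'⟩ := Finset.mem_image.mp this
      exact ⟨c', hc'⟩
    exact (eqm_abs_det_range_sub A g₂ g₁ hsub)
  | succ N ih =>
    intro g₁ g₂ hcard hd₁ hd₂
    set D := Finset.image ⇑g₁ Finset.univ \ Finset.image ⇑g₂ Finset.univ with hD
    by_cases hDe : D = ∅
    · have hsub : ∀ c, ∃ c', g₂ c' = g₁ c := by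
        intro c
        have : g₁ c ∈ Finset.image ⇑g₂ Finset.univ := by
          have := Finset.sdiff_eq_empty_iff_subset.mp hDe
          exact this (Finset.mem_image_of_mem _ (Finset.mem_univ c))
        obtain ⟨c', -, hc'⟩ := Finset.mem_image.mp this
        exact ⟨c', hc'⟩
      exact (eqm_abs_det_range_sub A g₂ g₁ hsub)
    · obtain ⟨x, hx⟩ := Finset.nonempty_iff_ne_empty.mpr hDe
      have hxmem := Finset.mem_sdiff.mp hx
      obtain ⟨k₁, -, hk₁⟩ := Finset.mem_image.mp hxmem.1
      have hxnot : ∀ l, g₂ l ≠ x := by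
        intro l hl
        exact hxmem.2 (hl ▸ Finset.mem_image_of_mem _ (Finset.mem_univ l))
      -- find a replacement column from g₂
      have hexl : ∃ l, (A.submatrix id (Function.update ⇑g₁ k₁ (⇑g₂ l))).det ≠ 0 := by
        by_contra hall
        push_neg at hall
        set M₁ : Matrix (Fin (m+1)) (Fin (m+1)) ℚ := A.submatrix id ⇑g₁ with hM₁
        set M₂ : Matrix (Fin (m+1)) (Fin (m+1)) ℚ := A.submatrix id ⇑g₂ with hM₂
        have hcr : ∀ l, cramer M₁ (fun r => M₂ r l) k₁ = 0 := by
          intro l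
          rw [cramer_apply]
          have : M₁.updateCol k₁ (fun r => M₂ r l) =
              A.submatrix id (Function.update ⇑g₁ k₁ (⇑g₂ l)) := by
            ext r c
            rw [updateCol_apply]
            by_cases hc : c = k₁
            · simp [hc, hM₂]
            · simp [hc, hM₁]
          rw [this]
          exact hall l
        have hM₂unit : IsUnit M₂.det := isUnit_iff_ne_zero.mpr hd₂
        set v : Fin (m+1) → ℚ := fun r => M₁ r k₁ with hv
        set cv : Fin (m+1) → ℚ := M₂⁻¹ *ᵥ v with hcv
        have hMc : M₂ *ᵥ cv = v := by
          rw [hcv, mulVec_mulVec, mul_nonsing_inv _ hM₂unit, one_mulVec]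
        have hvsum : v = ∑ l : Fin (m+1), cv l • (fun r => M₂ r l) := by
          funext r
          rw [← hMc]
          show (M₂ *ᵥ cv) r = _
          rw [mulVec, dotProduct, Finset.sum_apply]
          refine Finset.sum_congr rfl fun l _ => ?_
          simp [mul_comm]
        have hzero : cramer M₁ v k₁ = 0 := by
          rw [hvsum, map_sum, Finset.sum_apply]
          refine Finset.sum_eq_zero fun l _ => ?_
          rw [_root_.map_smul]
          simp [hcr l]
        rw [cramer_apply, updateCol_eq_self] at hzero
        exact hd₁ hzero
      obtain ⟨l, hl⟩ := hexl
      set y := g₂ l with hy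
      have hynotin : ∀ c, g₁ c ≠ y := by
        intro c hc
        by_cases hck : c = k₁
        · apply hxnot l
          rw [← hy, ← hc, hck, hk₁]
        · apply hl
          apply det_zero_of_column_eq hck
          intro r
          show A r (Function.update (⇑g₁) k₁ (g₂ l) c) = A r (Function.update (⇑g₁) k₁ (g₂ l) k₁)
          rw [Function.update_of_ne hck, Function.update_self, ← hy, hc]
      set g₁' : Fin (m+1) ↪ Fin (n+1) := ⟨Function.update ⇑g₁ k₁ y, eqm_update_inj g₁ y hynotin k₁⟩
        with hg₁'
      have hstep : |(A.submatrix id ⇑g₁).det| = |(A.submatrix id ⇑g₁').det| := by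
        refine eqm_adjacent A i hrow H g₁ g₁' k₁ y hynotin (fun c => ?_) hd₁ hl
        show Function.update ⇑g₁ k₁ y c = _
        rw [Function.update_apply]
      have hcard' : (Finset.image ⇑g₁' Finset.univ \ Finset.image ⇑g₂ Finset.univ).card ≤ N := by
        have hsubD : Finset.image ⇑g₁' Finset.univ \ Finset.image ⇑g₂ Finset.univ ⊆ D.erase x := by
          intro z hz
          have hz' := Finset.mem_sdiff.mp hz
          obtain ⟨c, -, hc⟩ := Finset.mem_image.mp hz'.1
          by_cases hck : c = k₁
          · exfalso
            apply hz'.2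
            have : z = y := by
              rw [← hc]
              show Function.update ⇑g₁ k₁ y c = y
              rw [hck, Function.update_self]
            rw [this, hy]
            exact Finset.mem_image_of_mem _ (Finset.mem_univ l)
          · have hzg₁ : g₁ c = z := by
              rw [← hc]
              show g₁ c = Function.update ⇑g₁ k₁ y c
              rw [Function.update_of_ne hck]
            refine Finset.mem_erase.mpr ⟨?_, Finset.mem_sdiff.mpr ⟨?_, hz'.2⟩⟩
            · intro hzx
              exact hck (g₁.injective (by rw [hzg₁, hzx, hk₁]))
            · rw [← hzg₁]
              exact Finset.mem_image_of_mem _ (Finset.mem_univ c)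
        have h1 : (Finset.image ⇑g₁' Finset.univ \ Finset.image ⇑g₂ Finset.univ).card ≤
            (D.erase x).card := Finset.card_le_card hsubD
        rw [Finset.card_erase_of_mem hx] at h1
        omega
      rw [hstep]
      exact ih g₁' g₂ hcard' hl hd₂


theorem stmt3 {m n : ℕ} (A : Matrix (Fin (m + 1)) (Fin (n + 1)) ℚ)
    (hA : LinearIndependent ℚ (fun r => A r)) (i : Fin (m + 1))
    (hrow : ∀ c, A i c = 0 ∨ A i c = 1 ∨ A i c = -1) :
    Equimodular A ↔ ∀ j : Fin (n + 1), A i j ≠ 0 → Equimodular (trimAt A i j) := by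
  constructor
  · rintro ⟨d, hd⟩ j hj
    refine ⟨d, fun h' hdet' => ?_⟩
    set f : Fin (m+1) → Fin (n+1) := Fin.cons j (fun l => j.succAbove (h' l)) with hfdef
    have hf0 : f 0 = j := rfl
    have hfs : ∀ l, f l.succ = j.succAbove (h' l) := fun l => rfl
    have hfinj : Function.Injective f := by
      intro a b hab
      induction a using Fin.cases with
      | zero =>
        induction b using Fin.cases with
        | zero => rfl
        | succ b' =>
          rw [hf0, hfs b'] at hab
          exact absurd hab.symm (Fin.succAbove_ne j (h' b'))
      | succ a' =>
        induction b using Fin.cases with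
        | zero =>
          rw [hf0, hfs a'] at hab
          exact absurd hab (Fin.succAbove_ne j (h' a'))
        | succ b' =>
          rw [hfs a', hfs b'] at hab
          rw [h'.injective (Fin.succAbove_right_injective hab)]
    obtain ⟨h'', hp, he⟩ := eqm_trim_minor A i hrow hj ⟨f, hfinj⟩ 0 hf0
    have hh'' : ⇑h'' = ⇑h' := by
      funext l
      apply Fin.succAbove_right_injective (p := j)
      rw [hp l]
      show f ((0 : Fin (m+1)).succAbove l) = j.succAbove (h' l)
      rw [Fin.succAbove_zero]
      exact hfs l
    rw [hh''] at he
    have hne : (A.submatrix id ⇑(⟨f, hfinj⟩ : Fin (m+1) ↪ Fin (n+1))).det ≠ 0 := by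
      intro h0
      rw [h0, abs_zero] at he
      exact hdet' (abs_eq_zero.mp he)
    rw [he]
    exact hd _ hne
  · intro H
    by_cases hex : ∃ g : Fin (m+1) ↪ Fin (n+1), (A.submatrix id ⇑g).det ≠ 0
    · obtain ⟨g₀, hg₀⟩ := hex
      refine ⟨|(A.submatrix id ⇑g₀).det|, fun g hg => ?_⟩
      exact eqm_pairwise A i hrow H _ g g₀ le_rfl hg hg₀
    · push_neg at hex
      exact ⟨0, fun g hg => absurd (hex g) hg⟩
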